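/- Let P be a proper hyperideal of a commutative multiplicative hyperring H and Q a hyperideal with Q ⊊ P. Then P is an sdf-absorbing hyperideal of H if and only if P/Q is an sdf-absorbing hyperideal of the quotient hyperring H/Q. -/
import Mathlib


open Pointwise

/-- A commutative multiplicative hyperring structure on an abelian group `H`. -/
structure MulHyperring (H : Type*) [AddCommGroup H] where
  hmul : H → H → Set H
  hmul_nonempty : ∀ x y : H, (hmul x y).Nonempty
  hmul_comm : ∀ x y : H, hmul x y = hmul y x
  hmul_assoc : ∀ x y z : H, (⋃ a ∈ hmul y z, hmul x a) = ⋃ b ∈ hmul x y, hmul b z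
  hmul_distrib : ∀ x y z : H, hmul x (y + z) ⊆ hmul x y + hmul x z
  hmul_neg : ∀ x y : H, hmul x (-y) = -(hmul x y)

namespace Hyper

variable {H : Type*} [AddCommGroup H] (mul : H → H → Set H)

/-- `P` is a hyperideal. -/
def IsIdeal (P : Set H) : Prop :=
  (0 : H) ∈ P ∧ (∀ x ∈ P, ∀ y ∈ P, x - y ∈ P) ∧ ∀ r : H, ∀ x ∈ P, mul r x ⊆ P

/-- Hyperproduct `a ∘ b₁ ∘ ⋯ ∘ bₙ`. -/
def hprod : H → List H → Set H
  | a, [] => {a}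
  | a, b :: l => ⋃ t ∈ mul a b, hprod t l

/-- `C` is a finite hyperproduct `c₁ ∘ ⋯ ∘ cₙ`. -/
def IsProduct (C : Set H) : Prop := ∃ (a : H) (l : List H), C = hprod mul a l

/-- `D` is a finite (nonempty) sum of finite hyperproducts. -/
def IsSum (D : Set H) : Prop :=
  ∃ L : List (Set H), L ≠ [] ∧ (∀ C ∈ L, IsProduct mul C) ∧ D = L.sum

/-- `P` is a `𝒞`-hyperideal. -/
def IsCIdeal (P : Set H) : Prop :=
  IsIdeal mul P ∧ ∀ C : Set H, IsProduct mul C → (C ∩ P).Nonempty → C ⊆ P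

/-- `P` is a strong `𝒞`-hyperideal. -/
def IsStrongCIdeal (P : Set H) : Prop :=
  IsIdeal mul P ∧ ∀ D : Set H, IsSum mul D → (D ∩ P).Nonempty → D ⊆ P

/-- The hypersquare `x² = x ∘ x`. -/
def sq (x : H) : Set H := mul x x

/-- `P` is an sdf-absorbing hyperideal. -/
def IsSdf (P : Set H) : Prop :=
  IsIdeal mul P ∧ P ≠ Set.univ ∧
    ∀ x y : H, x ≠ 0 → y ≠ 0 → sq mul x - sq mul y ⊆ P → x - y ∈ P ∨ x + y ∈ P

/-- `P` is a weakly sdf-absorbing hyperideal. -/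
def IsWeaklySdf (P : Set H) : Prop :=
  IsIdeal mul P ∧ P ≠ Set.univ ∧
    ∀ x y : H, x ≠ 0 → y ≠ 0 → (0 : H) ∉ sq mul x - sq mul y →
      sq mul x - sq mul y ⊆ P → x - y ∈ P ∨ x + y ∈ P

/-- `P` is a prime hyperideal. -/
def IsPrime (P : Set H) : Prop :=
  IsIdeal mul P ∧ P ≠ Set.univ ∧ ∀ x y : H, mul x y ⊆ P → x ∈ P ∨ y ∈ P

/-- The radical: intersection of the prime hyperideals containing `P`. -/
def rad (P : Set H) : Set H := ⋂₀ {Q : Set H | IsPrime mul Q ∧ P ⊆ Q}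

/-- `hpow mul x n` is the hyperpower `x^(n+1)`. -/
def hpow (x : H) (n : ℕ) : Set H := hprod mul x (List.replicate n x)

/-- `x` is nilpotent: `0 ∈ xⁿ` for some `n`. -/
def IsNilpotent (x : H) : Prop := ∃ n : ℕ, (0 : H) ∈ hpow mul x n

/-- `x` is a regular element: `x ∈ x² ∘ y` for some `y`. -/
def IsRegularElem (x : H) : Prop := ∃ y : H, x ∈ ⋃ t ∈ sq mul x, mul t y

/-- The hyperideal generated by a set `S`. -/
def span (S : Set H) : Set H := ⋂₀ {Q : Set H | IsIdeal mul Q ∧ S ⊆ Q}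

/-- `P` is a maximal hyperideal. -/
def IsMaximal (P : Set H) : Prop :=
  IsIdeal mul P ∧ P ≠ Set.univ ∧
    ∀ B : Set H, IsIdeal mul B → P ⊆ B → B = P ∨ B = Set.univ

end Hyper

/-- Componentwise hypermultiplication on a product. -/
def prodMul {H₁ H₂ : Type*} (m₁ : H₁ → H₁ → Set H₁) (m₂ : H₂ → H₂ → Set H₂) :
    H₁ × H₂ → H₁ × H₂ → Set (H₁ × H₂) :=
  fun a b => (m₁ a.1 b.1) ×ˢ (m₂ a.2 b.2)

/-- for hyperideals `Q ⊊ P`, `P` is sdf-absorbing in `H` iff `P/Q` is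
sdf-absorbing in `H/Q`.  The right-hand side is stated in terms of cosets: a coset
`x + Q` is nonzero iff `x ∉ Q`, it lies in `P/Q` iff `∃ p ∈ P, x - p ∈ Q`, and the
quotient hyperproduct of `x + Q` and `y + Q` is `{z + Q : z ∈ x ∘ y}`. -/
theorem stmt11 {H : Type*} [AddCommGroup H] (M : MulHyperring H) (P Q : Set H)
    (hP : Hyper.IsIdeal M.hmul P) (hPproper : P ≠ Set.univ)
    (hQ : Hyper.IsIdeal M.hmul Q) (hQP : Q ⊂ P) :
    Hyper.IsSdf M.hmul P ↔
      ((∃ x : H, ∀ p ∈ P, x - p ∉ Q) ∧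
        ∀ x y : H, x ∉ Q → y ∉ Q →
          (∀ t ∈ Hyper.sq M.hmul x, ∀ s ∈ Hyper.sq M.hmul y, ∃ p ∈ P, t - s - p ∈ Q) →
          ((∃ p ∈ P, (x - y) - p ∈ Q) ∨ ∃ p ∈ P, (x + y) - p ∈ Q)) := by
  have hQsubP : Q ⊆ P := hQP.subset
  have hsub := hP.2.1
  have padd : ∀ a ∈ P, ∀ b ∈ P, a + b ∈ P := by
    intro a ha b hb
    have : a - (0 - b) ∈ P := hsub a ha _ (hsub 0 hP.1 b hb)
    simpa using this
  have hmemP : ∀ z : H, (∃ p ∈ P, z - p ∈ Q) ↔ z ∈ P := by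
    intro z
    constructor
    · rintro ⟨p, hp, hq⟩
      have := padd _ (hQsubP hq) p hp
      simpa using this
    · intro hz
      exact ⟨z, hz, by simpa using hQ.1⟩
  constructor
  · rintro ⟨-, -, hsdf⟩
    refine ⟨?_, ?_⟩
    · obtain ⟨x, hx⟩ : ∃ x, x ∉ P := by
        by_contra h
        push_neg at h
        exact hPproper (Set.eq_univ_iff_forall.mpr h)
      exact ⟨x, fun p hp hxp => hx ((hmemP x).mp ⟨p, hp, hxp⟩)⟩
    · intro x y hx hy hsq
      have hx0 : x ≠ 0 := fun h => hx (h ▸ hQ.1)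
      have hy0 : y ≠ 0 := fun h => hy (h ▸ hQ.1)
      have hsub' : Hyper.sq M.hmul x - Hyper.sq M.hmul y ⊆ P := by
        rintro z ⟨t, ht, s, hs, rfl⟩
        obtain ⟨p, hp, hq⟩ := hsq t ht s hs
        exact (hmemP _).mp ⟨p, hp, hq⟩
      rcases hsdf x y hx0 hy0 hsub' with h | h
      · exact Or.inl ((hmemP _).mpr h)
      · exact Or.inr ((hmemP _).mpr h)
  · rintro ⟨-, hsdf⟩
    refine ⟨hP, hPproper, ?_⟩
    intro x y hx0 hy0 hsq
    have hpt : ∀ t ∈ Hyper.sq M.hmul x, ∀ s ∈ Hyper.sq M.hmul y, t - s ∈ P :=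
      fun t ht s hs => hsq (Set.sub_mem_sub ht hs)
    obtain ⟨c, hcP, hcQ⟩ : ∃ c, c ∈ P ∧ c ∉ Q := by
      rcases Set.exists_of_ssubset hQP with ⟨c, hc, hcq⟩
      exact ⟨c, hc, hcq⟩
    have sqP : ∀ z ∈ P, Hyper.sq M.hmul z ⊆ P := fun z hz => hP.2.2 z z hz
    have key : ∀ a : H, a ∉ Q → Hyper.sq M.hmul a ⊆ P → a ∈ P := by
      intro a haQ haP
      have h1 : ∀ t ∈ Hyper.sq M.hmul c, ∀ s ∈ Hyper.sq M.hmul a, ∃ p ∈ P, t - s - p ∈ Q := by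
        intro t ht s hs
        exact ⟨t - s, hsub t (sqP c hcP ht) s (haP hs), by simpa using hQ.1⟩
      rcases hsdf c a hcQ haQ h1 with h | h
      · have hca : c - a ∈ P := (hmemP _).mp h
        have := hsub c hcP _ hca
        simpa using this
      · have hca : c + a ∈ P := (hmemP _).mp h
        have := hsub _ hca c hcP
        simpa using this
    have sqQ : ∀ z ∈ Q, Hyper.sq M.hmul z ⊆ Q := fun z hz => hQ.2.2 z z hz
    by_cases hxQ : x ∈ Q
    · by_cases hyQ : y ∈ Q
      · exact Or.inl (hQsubP (hQ.2.1 x hxQ y hyQ))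
      · -- sq y ⊆ P, hence y ∈ P
        obtain ⟨t0, ht0⟩ := M.hmul_nonempty x x
        have ht0P : t0 ∈ P := hQsubP (sqQ x hxQ ht0)
        have hyP : y ∈ P := by
          apply key y hyQ
          intro s hs
          have h1 : t0 - s ∈ P := hpt t0 ht0 s hs
          have := hsub t0 ht0P _ h1
          simpa using this
        exact Or.inl (hsub x (hQsubP hxQ) y hyP)
    · by_cases hyQ : y ∈ Q
      · obtain ⟨s0, hs0⟩ := M.hmul_nonempty y y
        have hs0P : s0 ∈ P := hQsubP (sqQ y hyQ hs0)
        have hxP : x ∈ P := by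
          apply key x hxQ
          intro t ht
          have h1 : t - s0 ∈ P := hpt t ht s0 hs0
          have := padd _ h1 s0 hs0P
          simpa using this
        exact Or.inl (hsub x hxP y (hQsubP hyQ))
      · have h1 : ∀ t ∈ Hyper.sq M.hmul x, ∀ s ∈ Hyper.sq M.hmul y, ∃ p ∈ P, t - s - p ∈ Q :=
          fun t ht s hs => ⟨t - s, hpt t ht s hs, by simpa using hQ.1⟩
        rcases hsdf x y hxQ hyQ h1 with h | h
        · exact Or.inl ((hmemP _).mp h)
        · exact Or.inr ((hmemP _).mp h)
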